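/- arXiv:1411.0576 — 2 statements merged into one kernel-verified Lean document; each statement's English description precedes it below -/
import Mathlib

section
/- Let V₀ > 0 be a constant and let U ∈ H^s(ℝ^N) ∩ C¹(ℝ^N) be a positive, bounded, radially symmetric function with ∂_i U ∈ H^s(ℝ^N) for each i, satisfying (−Δ)^s U + V₀ U = U^p pointwise in ℝ^N. Then for every i, j ∈ {1,…,N} with i ≠ j: ∫_{ℝ^N} U^{p−1} (∂_i U)(∂_j U) dx = 0 and ⟨∂_i U, ∂_j U⟩_{D^{s,2}} + V₀ ∫_{ℝ^N} (∂_i U)(∂_j U) dx = 0. -/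
open MeasureTheory Filter Metric

noncomputable section

abbrev Spc (N : ℕ) := EuclideanSpace ℝ (Fin N)

/-- Fourier transform of a real function on ℝ^N. -/
def FT {N : ℕ} (u : Spc N → ℝ) : Spc N → ℂ :=
  FourierTransform.fourier (fun x => (u x : ℂ))

/-- Squared Gagliardo/Fourier seminorm ‖u‖_{D^{s,2}}². -/
def Ds2sq {N : ℕ} (s : ℝ) (u : Spc N → ℝ) : ℝ :=
  ∫ ξ : Spc N, ‖ξ‖ ^ (2*s) * ‖FT u ξ‖ ^ 2

/-- Membership in H^s(ℝ^N). -/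
def MemHs {N : ℕ} (s : ℝ) (u : Spc N → ℝ) : Prop :=
  MemLp u 2 (volume : Measure (Spc N)) ∧
    Integrable (fun ξ : Spc N => ‖ξ‖ ^ (2*s) * ‖FT u ξ‖ ^ 2)

/-- L^q norm (for finite q, as a concrete integral expression). -/
def lpnorm {N : ℕ} (q : ℝ) (u : Spc N → ℝ) : ℝ :=
  (∫ x : Spc N, |u x| ^ q) ^ (1/q)

/-- Fractional Laplacian with normalizing constant c. -/
def fracLap {N : ℕ} (s c : ℝ) (u : Spc N → ℝ) (x : Spc N) : ℝ :=
  c * ∫ y : Spc N, (2 * u x - u (x + y) - u (x - y)) / ‖y‖ ^ ((N : ℝ) + 2*s)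

/-- Real inner product ⟨u,w⟩_{D^{s,2}}. -/
def Dinner {N : ℕ} (s : ℝ) (u w : Spc N → ℝ) : ℝ :=
  ∫ ξ : Spc N, ‖ξ‖ ^ (2*s) * (FT u ξ * (starRingEnd ℂ) (FT w ξ)).re

/-- i-th partial derivative. -/
def pd {N : ℕ} (i : Fin N) (u : Spc N → ℝ) (x : Spc N) : ℝ :=
  fderiv ℝ u x (EuclideanSpace.single i 1)

def Radial {N : ℕ} (u : Spc N → ℝ) : Prop := ∀ x y : Spc N, ‖x‖ = ‖y‖ → u x = u y

/-! ### Auxiliary: reflection in the i-th coordinate -/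

/-- Reflection of the i-th coordinate, as a linear isometry equivalence. -/
def coordRefl {N : ℕ} (i : Fin N) : Spc N ≃ₗᵢ[ℝ] Spc N where
  toFun := fun x => WithLp.toLp 2 (fun k => if k = i then -x k else x k : Fin N → ℝ)
  invFun := fun x => WithLp.toLp 2 (fun k => if k = i then -x k else x k : Fin N → ℝ)
  map_add' := by intro x y; ext k; by_cases h : k = i <;> simp [h]; ring
  map_smul' := by intro c x; ext k; by_cases h : k = i <;> simp [h]
  left_inv := by intro x; ext k; by_cases h : k = i <;> simp [h]
  right_inv := by intro x; ext k; by_cases h : k = i <;> simp [h]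
  norm_map' := by
    intro x
    rw [EuclideanSpace.norm_eq, EuclideanSpace.norm_eq]
    congr 1
    apply Finset.sum_congr rfl
    intro k _
    by_cases h : k = i <;> simp [h]

lemma coordRefl_apply {N : ℕ} (i : Fin N) (x : Spc N) (k : Fin N) :
    coordRefl i x k = if k = i then -x k else x k := rfl

lemma coordRefl_refl {N : ℕ} (i : Fin N) (x : Spc N) :
    coordRefl i (coordRefl i x) = x := (coordRefl i).left_inv x

lemma coordRefl_single_self {N : ℕ} (i : Fin N) :
    coordRefl i (EuclideanSpace.single i (1:ℝ)) = -EuclideanSpace.single i (1:ℝ) := by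
  ext k
  simp only [coordRefl_apply]
  by_cases h : k = i <;> simp [h, EuclideanSpace.single_apply]

lemma coordRefl_single_ne {N : ℕ} {i j : Fin N} (h : i ≠ j) :
    coordRefl i (EuclideanSpace.single j (1:ℝ)) = EuclideanSpace.single j (1:ℝ) := by
  ext k
  simp only [coordRefl_apply]
  by_cases hk : k = i
  · subst hk; simp [EuclideanSpace.single_apply, h, h.symm]
  · simp [hk]

/-- Integration is invariant under the reflection. -/
lemma integral_coordRefl {N : ℕ} (i : Fin N) {E : Type*} [NormedAddCommGroup E]
    [NormedSpace ℝ E] (f : Spc N → E) :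
    ∫ x : Spc N, f (coordRefl i x) = ∫ x : Spc N, f x :=
  MeasurePreserving.integral_comp (coordRefl i).measurePreserving
    (coordRefl i).toHomeomorph.measurableEmbedding f

/-- An odd function (w.r.t. reflection in a coordinate) has zero integral. -/
lemma integral_eq_zero_of_odd {N : ℕ} (i : Fin N) (f : Spc N → ℝ)
    (hf : ∀ x, f (coordRefl i x) = -f x) : ∫ x : Spc N, f x = 0 := by
  have h1 : ∫ x : Spc N, f (coordRefl i x) = ∫ x : Spc N, f x := integral_coordRefl i f
  have h2 : ∫ x : Spc N, f (coordRefl i x) = -∫ x : Spc N, f x := by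
    simp_rw [hf]; exact integral_neg f
  linarith [h1, h2]

/-- The Fourier transform intertwines with reflections. -/
lemma FT_coordRefl {N : ℕ} (i : Fin N) (f : Spc N → ℝ) (ξ : Spc N) :
    FT (fun x => f (coordRefl i x)) ξ = FT f (coordRefl i ξ) := by
  unfold FT
  exact Real.fourier_comp_linearIsometry (coordRefl i) (fun x => (f x : ℂ)) ξ

lemma FT_neg {N : ℕ} (f : Spc N → ℝ) (ξ : Spc N) :
    FT (fun x => -f x) ξ = -FT f ξ := by
  unfold FT
  rw [Real.fourier_eq, Real.fourier_eq, ← integral_neg]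
  congr 1
  funext x
  push_cast
  simp [smul_neg]

/-- distinct partial derivatives of the ground state are orthogonal. -/
theorem ground_state_derivatives_mutually_orthogonal
    (N : ℕ) (hN : 1 ≤ N) (s : ℝ) (hs : s ∈ Set.Ioo (0:ℝ) 1) (hNs : 2 * s < (N : ℝ))
    (p : ℝ) (hp : 1 < p) (hp' : p < ((N : ℝ) + 2*s) / ((N : ℝ) - 2*s))
    (c : ℝ) (hc : 0 < c) (V₀ : ℝ) (hV₀ : 0 < V₀)
    (U : Spc N → ℝ) (hUH : MemHs s U) (hUC1 : ContDiff ℝ 1 U)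
    (hUpos : ∀ x, 0 < U x) (hUbd : ∃ M : ℝ, ∀ x, U x ≤ M)
    (hUrad : Radial U)
    (hpdH : ∀ i : Fin N, MemHs s (pd i U))
    (heq : ∀ x : Spc N, fracLap s c U x + V₀ * U x = U x ^ p) :
    ∀ i j : Fin N, i ≠ j →
      (∫ x : Spc N, U x ^ (p - 1) * pd i U x * pd j U x = 0) ∧
      Dinner s (pd i U) (pd j U) + V₀ * ∫ x : Spc N, pd i U x * pd j U x = 0 := by
  intro i j hij
  set R := coordRefl i with hR
  -- U is invariant under R
  have hUR : ∀ x, U (R x) = U x := fun x => hUrad _ _ ((coordRefl i).norm_map x)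
  have hUdiff : Differentiable ℝ U := hUC1.differentiable one_ne_zero
  -- chain rule: fderiv U x v = fderiv U (R x) (R v)
  have hchain : ∀ x v, fderiv ℝ U x v = fderiv ℝ U (R x) (R v) := by
    intro x v
    have hcomp : U = U ∘ R := by funext x; simp [Function.comp, hUR]
    have : fderiv ℝ U x = fderiv ℝ (U ∘ R) x := by rw [← hcomp]
    rw [this, fderiv_comp x (hUdiff (R x)) (R.differentiableAt)]
    simp [R.fderiv]
  -- oddness/evenness of partial derivatives under R
  have hpd_i : ∀ x, pd i U (R x) = -pd i U x := by
    intro x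
    have := hchain x (EuclideanSpace.single i (1:ℝ))
    rw [coordRefl_single_self] at this
    simp only [map_neg] at this
    unfold pd
    linarith [this]
  have hpd_j : ∀ x, pd j U (R x) = pd j U x := by
    intro x
    have := hchain x (EuclideanSpace.single j (1:ℝ))
    rw [coordRefl_single_ne hij] at this
    unfold pd
    linarith [this]
  -- FT oddness / evenness
  have hFT_i : ∀ ξ, FT (pd i U) (R ξ) = -FT (pd i U) ξ := by
    intro ξ
    rw [← FT_coordRefl i (pd i U) ξ]
    have : (fun x => pd i U (R x)) = fun x => -pd i U x := funext hpd_i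
    rw [this, FT_neg]
  have hFT_j : ∀ ξ, FT (pd j U) (R ξ) = FT (pd j U) ξ := by
    intro ξ
    rw [← FT_coordRefl i (pd j U) ξ]
    congr 1
    exact funext hpd_j
  constructor
  · -- first integral
    apply integral_eq_zero_of_odd i
    intro x
    rw [hUR, hpd_i, hpd_j]
    ring
  · -- second statement
    have hD : Dinner s (pd i U) (pd j U) = 0 := by
      unfold Dinner
      apply integral_eq_zero_of_odd i
      intro ξ
      rw [(coordRefl i).norm_map ξ]
      have : FT (pd i U) (coordRefl i ξ) * (starRingEnd ℂ) (FT (pd j U) (coordRefl i ξ))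
          = -(FT (pd i U) ξ * (starRingEnd ℂ) (FT (pd j U) ξ)) := by
        rw [hFT_i ξ, hFT_j ξ]; ring
      rw [this, Complex.neg_re]
      ring
    have hL2 : ∫ x : Spc N, pd i U x * pd j U x = 0 := by
      apply integral_eq_zero_of_odd i
      intro x
      rw [hpd_i, hpd_j]
      ring
    rw [hD, hL2]
    ring
end
end

section
/- Let c̄ > 0, R > 0, and let z : ℝ^N → ℝ be a bounded C² function with z(x) → 0 as |x| → ∞. Assume that z(x) > 0 for all x ∈ B(0,R), and that (−Δ)^s z(x) + c̄ z(x) ≥ 0 for all x ∈ ℝ^N \ B(0,R). Then z(x) ≥ 0 for all x ∈ ℝ^N. -/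
open MeasureTheory Filter Metric

noncomputable section

/-- a maximum-principle-type result for the fractional Laplacian. -/
theorem fractional_maximum_principle
    (N : ℕ) (hN : 1 ≤ N) (s : ℝ) (hs : s ∈ Set.Ioo (0:ℝ) 1)
    (c : ℝ) (hc : 0 < c)
    (cbar : ℝ) (hcbar : 0 < cbar) (R : ℝ) (hR : 0 < R)
    (z : Spc N → ℝ) (hz : ContDiff ℝ 2 z) (hzbd : ∃ M : ℝ, ∀ x, |z x| ≤ M)
    (hzlim : ∀ δ > (0:ℝ), ∃ ρ : ℝ, ∀ x : Spc N, ρ ≤ ‖x‖ → |z x| ≤ δ)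
    (hzpos : ∀ x ∈ ball (0 : Spc N) R, 0 < z x)
    (hineq : ∀ x : Spc N, x ∉ ball (0 : Spc N) R → 0 ≤ fracLap s c z x + cbar * z x) :
    ∀ x : Spc N, 0 ≤ z x := by
  by_contra h
  push_neg at h
  obtain ⟨x1, hx1⟩ := h
  obtain ⟨ρ, hρ⟩ := hzlim (-z x1 / 2) (by linarith)
  set r := max ρ ‖x1‖ with hrdef
  have hx1mem : x1 ∈ closedBall (0 : Spc N) r := by
    simp only [mem_closedBall_zero_iff]
    exact le_max_right _ _
  obtain ⟨x0, hx0mem, hx0min⟩ := (isCompact_closedBall (0 : Spc N) r).exists_isMinOn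
    ⟨x1, hx1mem⟩ hz.continuous.continuousOn
  have hz01 : z x0 ≤ z x1 := hx0min hx1mem
  have hglob : ∀ x, z x0 ≤ z x := by
    intro x
    by_cases hx : x ∈ closedBall (0 : Spc N) r
    · exact hx0min hx
    · have hxn : ρ ≤ ‖x‖ := by
        simp only [mem_closedBall_zero_iff, not_le] at hx
        exact le_trans (le_max_left _ _) hx.le
      have := (abs_le.mp (hρ x hxn)).1
      linarith
  have hnot : x0 ∉ ball (0 : Spc N) R := by
    intro hmem
    have := hzpos x0 hmem
    linarith
  have hfl : fracLap s c z x0 ≤ 0 := by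
    unfold fracLap
    apply mul_nonpos_of_nonneg_of_nonpos hc.le
    apply integral_nonpos
    intro y
    apply div_nonpos_of_nonpos_of_nonneg
    · have h1 := hglob (x0 + y)
      have h2 := hglob (x0 - y)
      linarith
    · positivity
  have := hineq x0 hnot
  have hneg : cbar * z x0 < 0 := mul_neg_of_pos_of_neg hcbar (by linarith)
  linarith
end
end
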